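/- arXiv:1402.4604 — 3 statements merged into one kernel-verified Lean document; each statement's English description precedes it below -/
import Mathlib

section
/- Let ψ ∈ L¹(ℝ^d) ∩ L²(ℝ^d) and let D be a closed subgroup of GL(d,ℝ) with left Haar measure da. Then for every a ∈ GL(d,ℝ) and every (x,ξ) ∈ ℝ^{2d}, the function q ↦ W_ψ(a^{−1}(x − q), ᵗa ξ) is integrable on ℝ^d with ∫_{ℝ^d} W_ψ(a^{−1}(x − q), ᵗa ξ) dq = |det a| · |ψ̂(ᵗa ξ)|², and consequently, for every (x,ξ) ∈ ℝ^{2d}, ∫_D ( ∫_{ℝ^d} W_ψ(a^{−1}(x − q), ᵗa ξ) dq ) |det a|^{−1} da = ∫_D |ψ̂(ᵗa ξ)|² da, with equality in [0,∞]. In particular, the Wigner admissibility integral of the wavelet group H = ℝ^d ⋊ D coincides with the Calderón admissibility integral ∫_D |ψ̂(ᵗa ξ)|² da. -/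
open MeasureTheory Real Complex Matrix
open scoped ENNReal MatrixGroups

/-- The Wigner distribution `W_f` of a function `f ∈ L²(ℝ^d)`. -/
noncomputable def wigner {d : ℕ} (f : (Fin d → ℝ) → ℂ) (x ξ : Fin d → ℝ) : ℂ :=
  ∫ y : Fin d → ℝ,
    Complex.exp (-2 * Real.pi * Complex.I * ((ξ ⬝ᵥ y : ℝ) : ℂ)) *
      f (x + (2 : ℝ)⁻¹ • y) * (starRingEnd ℂ) (f (x - (2 : ℝ)⁻¹ • y))

/-- The Fourier transform `f̂(ξ) = ∫ f(x) e^{-2πi⟨x,ξ⟩} dx`. -/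
noncomputable def fourierT {d : ℕ} (f : (Fin d → ℝ) → ℂ) (ξ : Fin d → ℝ) : ℂ :=
  ∫ x : Fin d → ℝ, f x * Complex.exp (-2 * Real.pi * Complex.I * ((x ⬝ᵥ ξ : ℝ) : ℂ))

section aux
variable {d : ℕ}

lemma qmp_affine (c : ℝ) (hc : c ≠ 0) (u : Fin d → ℝ) :
    Measure.QuasiMeasurePreserving (fun y : Fin d → ℝ => u + c • y) volume volume := by
  have h1 : MeasurePreserving (fun y : Fin d → ℝ => u + y) volume volume :=
    measurePreserving_add_left volume u
  have hdet : LinearMap.det (c • (LinearMap.id : (Fin d → ℝ) →ₗ[ℝ] (Fin d → ℝ))) ≠ 0 := by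
    simp [LinearMap.det_smul, hc]
  have h2 : Measure.QuasiMeasurePreserving (fun y : Fin d → ℝ => c • y) volume volume := by
    refine ⟨measurable_const_smul c, ?_⟩
    have h := Measure.map_linearMap_addHaar_eq_smul_addHaar (volume : Measure (Fin d → ℝ)) hdet
    have hfun : ⇑(c • (LinearMap.id : (Fin d → ℝ) →ₗ[ℝ] (Fin d → ℝ))) = fun y => c • y := by
      funext y; simp
    rw [hfun] at h
    rw [h]
    exact Measure.smul_absolutelyContinuous
  exact h1.quasiMeasurePreserving.comp h2

lemma qmp_shear (c : ℝ) (hc : c ≠ 0) :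
    Measure.QuasiMeasurePreserving
      (fun p : (Fin d → ℝ) × (Fin d → ℝ) => p.1 + c • p.2)
      ((volume : Measure (Fin d → ℝ)).prod volume) volume := by
  have hm : Measurable (fun p : (Fin d → ℝ) × (Fin d → ℝ) => p.1 + c • p.2) :=
    measurable_fst.add (measurable_snd.const_smul c)
  refine ⟨hm, Measure.AbsolutelyContinuous.mk fun s hs h0 => ?_⟩
  rw [Measure.map_apply hm hs, Measure.prod_apply (hm hs)]
  have hz : ∀ u : Fin d → ℝ,
      volume (Prod.mk u ⁻¹' ((fun p : (Fin d → ℝ) × (Fin d → ℝ) => p.1 + c • p.2) ⁻¹' s)) = 0 :=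
    fun u => (qmp_affine c hc u).preimage_null h0
  rw [lintegral_congr hz, lintegral_zero]

end aux

section core
variable {d : ℕ}

lemma nnnorm_cexp_aux (r : ℝ) :
    ‖Complex.exp (-2 * Real.pi * Complex.I * (r : ℂ))‖₊ = 1 := by
  have h : (-2 * (Real.pi : ℂ) * Complex.I * (r : ℂ)) = ((-2 * Real.pi * r : ℝ) : ℂ) * Complex.I := by
    push_cast; ring
  have h2 : ‖Complex.exp (-2 * (Real.pi:ℂ) * Complex.I * (r : ℂ))‖ = 1 := by
    rw [h, Complex.norm_exp_ofReal_mul_I]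
  exact NNReal.coe_injective (by simpa using h2)

lemma measurable_dot (η : Fin d → ℝ) : Measurable fun y : Fin d → ℝ => η ⬝ᵥ y := by
  simpa [dotProduct] using
    Finset.measurable_sum Finset.univ
      (fun i _ => by fun_prop)

lemma wigner_key (ψ : (Fin d → ℝ) → ℂ) (hψ : Integrable ψ (volume : Measure (Fin d → ℝ)))
    (η : Fin d → ℝ) :
    Integrable (fun u => wigner ψ u η) (volume : Measure (Fin d → ℝ)) ∧
      ∫ u, wigner ψ u η = ((‖fourierT ψ η‖ ^ 2 : ℝ) : ℂ) := by
  classical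
  set e : (Fin d → ℝ) → ℂ := fun y => Complex.exp (-2 * Real.pi * Complex.I * ((η ⬝ᵥ y : ℝ) : ℂ))
    with he
  set F : (Fin d → ℝ) × (Fin d → ℝ) → ℂ :=
    fun p => e p.2 * ψ (p.1 + (2:ℝ)⁻¹ • p.2) * (starRingEnd ℂ) (ψ (p.1 - (2:ℝ)⁻¹ • p.2)) with hF
  set G : (Fin d → ℝ) × (Fin d → ℝ) → ℂ :=
    fun p => e p.2 * ψ (p.1 + p.2) * (starRingEnd ℂ) (ψ p.1) with hG
  -- measurability
  have hem : Measurable fun p : (Fin d → ℝ) × (Fin d → ℝ) => e p.2 := by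
    apply Complex.measurable_exp.comp
    exact (measurable_const.mul ((Complex.measurable_ofReal.comp
      ((measurable_dot η).comp measurable_snd))))
  have hψ1 : AEStronglyMeasurable (fun p : (Fin d → ℝ) × (Fin d → ℝ) => ψ (p.1 + p.2))
      ((volume : Measure (Fin d → ℝ)).prod volume) := by
    have := hψ.1.comp_quasiMeasurePreserving (qmp_shear (d := d) 1 one_ne_zero)
    simpa [Function.comp_def] using this
  have hψhalf : AEStronglyMeasurable
      (fun p : (Fin d → ℝ) × (Fin d → ℝ) => ψ (p.1 + (2:ℝ)⁻¹ • p.2))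
      ((volume : Measure (Fin d → ℝ)).prod volume) :=
    hψ.1.comp_quasiMeasurePreserving (qmp_shear (d := d) (2:ℝ)⁻¹ (by norm_num))
  have hψhalf' : AEStronglyMeasurable
      (fun p : (Fin d → ℝ) × (Fin d → ℝ) => ψ (p.1 - (2:ℝ)⁻¹ • p.2))
      ((volume : Measure (Fin d → ℝ)).prod volume) := by
    have h := hψ.1.comp_quasiMeasurePreserving (qmp_shear (d := d) (-(2:ℝ)⁻¹) (by norm_num))
    have hfe : (ψ ∘ fun p : (Fin d → ℝ) × (Fin d → ℝ) => p.1 + (-(2:ℝ)⁻¹) • p.2)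
        = fun p : (Fin d → ℝ) × (Fin d → ℝ) => ψ (p.1 - (2:ℝ)⁻¹ • p.2) := by
      funext p; simp only [Function.comp_apply, neg_smul, ← sub_eq_add_neg]
    rwa [hfe] at h
  have hψfst : AEStronglyMeasurable (fun p : (Fin d → ℝ) × (Fin d → ℝ) => ψ p.1)
      ((volume : Measure (Fin d → ℝ)).prod volume) :=
    hψ.1.comp_quasiMeasurePreserving Measure.quasiMeasurePreserving_fst
  have hFm : AEStronglyMeasurable F ((volume : Measure (Fin d → ℝ)).prod volume) :=
    ((hem.aestronglyMeasurable.mul hψhalf).mul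
      (Complex.continuous_conj.comp_aestronglyMeasurable hψhalf'))
  have hGm : AEStronglyMeasurable G ((volume : Measure (Fin d → ℝ)).prod volume) :=
    ((hem.aestronglyMeasurable.mul hψ1).mul
      (Complex.continuous_conj.comp_aestronglyMeasurable hψfst))
  -- integrability of G
  have hGnorm : ∀ p : (Fin d → ℝ) × (Fin d → ℝ),
      (‖G p‖₊ : ℝ≥0∞) = (‖ψ (p.1 + p.2)‖₊ : ℝ≥0∞) * (‖ψ p.1‖₊ : ℝ≥0∞) := by
    intro p
    simp only [hG, he]
    rw [nnnorm_mul, nnnorm_mul, nnnorm_cexp_aux, one_mul, RCLike.nnnorm_conj, ENNReal.coe_mul]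
  have hIψ : (∫⁻ z, (‖ψ z‖₊ : ℝ≥0∞) ∂(volume : Measure (Fin d → ℝ))) < ∞ := hψ.2
  have hGfin : HasFiniteIntegral G ((volume : Measure (Fin d → ℝ)).prod volume) := by
    show (∫⁻ p, (‖G p‖₊ : ℝ≥0∞) ∂((volume : Measure (Fin d → ℝ)).prod volume)) < ∞
    rw [lintegral_congr hGnorm]
    have haem : AEMeasurable
        (fun p : (Fin d → ℝ) × (Fin d → ℝ) => (‖ψ (p.1 + p.2)‖₊ : ℝ≥0∞) * (‖ψ p.1‖₊ : ℝ≥0∞))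
        ((volume : Measure (Fin d → ℝ)).prod volume) :=
      hψ1.enorm.mul hψfst.enorm
    rw [MeasureTheory.lintegral_prod _ haem]
    have hinner : ∀ u : Fin d → ℝ,
        (∫⁻ y, (‖ψ (u + y)‖₊ : ℝ≥0∞) * (‖ψ u‖₊ : ℝ≥0∞) ∂(volume : Measure (Fin d → ℝ)))
          = (∫⁻ z, (‖ψ z‖₊ : ℝ≥0∞) ∂(volume : Measure (Fin d → ℝ))) * (‖ψ u‖₊ : ℝ≥0∞) := by
      intro u
      rw [lintegral_mul_const' _ _ ENNReal.coe_ne_top]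
      congr 1
      exact lintegral_add_left_eq_self (fun z => (‖ψ z‖₊ : ℝ≥0∞)) u
    rw [lintegral_congr hinner, lintegral_const_mul' _ _ hIψ.ne]
    exact ENNReal.mul_lt_top hIψ hIψ
  have hGi : Integrable G ((volume : Measure (Fin d → ℝ)).prod volume) := ⟨hGm, hGfin⟩
  -- the shear is measure preserving
  have hΦ : MeasurePreserving
      (fun p : (Fin d → ℝ) × (Fin d → ℝ) => (p.1 + (2:ℝ)⁻¹ • p.2, p.2))
      ((volume : Measure (Fin d → ℝ)).prod volume)
      ((volume : Measure (Fin d → ℝ)).prod volume) := by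
    have h1 : MeasurePreserving
        (fun p : (Fin d → ℝ) × (Fin d → ℝ) => (id p.1, p.2 + (2:ℝ)⁻¹ • p.1))
        ((volume : Measure (Fin d → ℝ)).prod volume)
        ((volume : Measure (Fin d → ℝ)).prod volume) :=
by
      refine MeasurePreserving.skew_product (MeasurePreserving.id _) ?_
        (ae_of_all _ fun a => map_add_right_eq_self volume _)
      show Measurable fun p : (Fin d → ℝ) × (Fin d → ℝ) => p.2 + (2:ℝ)⁻¹ • p.1
      exact measurable_snd.add ((measurable_const_smul ((2:ℝ)⁻¹)).comp measurable_fst)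
    have h2 := (Measure.measurePreserving_swap.comp h1).comp
      Measure.measurePreserving_swap
    exact h2
  have hFG : (F ∘ (fun p : (Fin d → ℝ) × (Fin d → ℝ) => (p.1 + (2:ℝ)⁻¹ • p.2, p.2))) = G := by
    funext p
    have h1 : p.1 + (2:ℝ)⁻¹ • p.2 + (2:ℝ)⁻¹ • p.2 = p.1 + p.2 := by
      rw [add_assoc, ← add_smul]; norm_num
    have h2 : p.1 + (2:ℝ)⁻¹ • p.2 - (2:ℝ)⁻¹ • p.2 = p.1 := add_sub_cancel_right _ _
    simp only [hF, hG, Function.comp_apply, h1, h2]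
  have hFi : Integrable F ((volume : Measure (Fin d → ℝ)).prod volume) :=
    (hΦ.integrable_comp hFm).mp (hFG.symm ▸ hGi)
  -- identify the wigner function with the partial integral of F
  have hw : (fun u => wigner ψ u η) = fun u => ∫ y, F (u, y) ∂(volume : Measure (Fin d → ℝ)) := by
    funext u; rfl
  constructor
  · rw [hw]; exact hFi.integral_prod_left
  · rw [hw]
    have hiter : (∫ u, (∫ y, F (u, y) ∂(volume : Measure (Fin d → ℝ)))
          ∂(volume : Measure (Fin d → ℝ)))
        = ∫ p, F p ∂((volume : Measure (Fin d → ℝ)).prod volume) :=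
      (MeasureTheory.integral_prod F hFi).symm
    rw [hiter]
    have hmap : (∫ p, F p ∂((volume : Measure (Fin d → ℝ)).prod volume))
        = ∫ p, G p ∂((volume : Measure (Fin d → ℝ)).prod volume) := by
      conv_lhs => rw [← hΦ.map_eq]
      rw [integral_map hΦ.measurable.aemeasurable (by rwa [hΦ.map_eq])]
      have hFG' : ∀ p : (Fin d → ℝ) × (Fin d → ℝ),
          F (p.1 + (2:ℝ)⁻¹ • p.2, p.2) = G p := fun p => congrFun hFG p
      simp only [hFG']
    rw [hmap, MeasureTheory.integral_prod G hGi]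
    set I0 : ℂ := ∫ w, Complex.exp (-2 * Real.pi * Complex.I * ((η ⬝ᵥ w : ℝ) : ℂ)) * ψ w with hI0
    have hpt : ∀ v y : Fin d → ℝ, G (v, y)
        = (Complex.exp (2 * Real.pi * Complex.I * ((η ⬝ᵥ v : ℝ) : ℂ)) * (starRingEnd ℂ) (ψ v)) *
          (Complex.exp (-2 * Real.pi * Complex.I * ((η ⬝ᵥ (v + y) : ℝ) : ℂ)) * ψ (v + y)) := by
      intro v y
      have hsplit : Complex.exp (-2 * Real.pi * Complex.I * ((η ⬝ᵥ (v + y) : ℝ) : ℂ))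
          = Complex.exp (-2 * Real.pi * Complex.I * ((η ⬝ᵥ v : ℝ) : ℂ)) *
            Complex.exp (-2 * Real.pi * Complex.I * ((η ⬝ᵥ y : ℝ) : ℂ)) := by
        rw [← Complex.exp_add]
        congr 1
        have : ((η ⬝ᵥ (v + y) : ℝ) : ℂ) = ((η ⬝ᵥ v : ℝ) : ℂ) + ((η ⬝ᵥ y : ℝ) : ℂ) := by
          rw [dotProduct_add]; push_cast; ring
        rw [this]; ring
      have hinv : Complex.exp (2 * Real.pi * Complex.I * ((η ⬝ᵥ v : ℝ) : ℂ)) *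
          Complex.exp (-2 * Real.pi * Complex.I * ((η ⬝ᵥ v : ℝ) : ℂ)) = 1 := by
        rw [← Complex.exp_add, show (2 * (Real.pi:ℂ) * Complex.I * ((η ⬝ᵥ v : ℝ) : ℂ) +
          -2 * Real.pi * Complex.I * ((η ⬝ᵥ v : ℝ) : ℂ)) = 0 by ring, Complex.exp_zero]
      rw [hsplit]
      simp only [hG, he]
      calc Complex.exp (-2 * Real.pi * Complex.I * ((η ⬝ᵥ y : ℝ) : ℂ)) * ψ (v + y) *
            (starRingEnd ℂ) (ψ v)
          = (Complex.exp (2 * Real.pi * Complex.I * ((η ⬝ᵥ v : ℝ) : ℂ)) *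
              Complex.exp (-2 * Real.pi * Complex.I * ((η ⬝ᵥ v : ℝ) : ℂ))) *
            (Complex.exp (-2 * Real.pi * Complex.I * ((η ⬝ᵥ y : ℝ) : ℂ)) * ψ (v + y) *
              (starRingEnd ℂ) (ψ v)) := by rw [hinv, one_mul]
        _ = _ := by ring
    have hinner : ∀ v : Fin d → ℝ,
        (∫ y, G (v, y) ∂(volume : Measure (Fin d → ℝ)))
          = (Complex.exp (2 * Real.pi * Complex.I * ((η ⬝ᵥ v : ℝ) : ℂ)) *
              (starRingEnd ℂ) (ψ v)) * I0 := by
      intro v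
      simp only [hpt]
      rw [MeasureTheory.integral_const_mul]
      congr 1
      exact integral_add_left_eq_self
        (fun w => Complex.exp (-2 * Real.pi * Complex.I * ((η ⬝ᵥ w : ℝ) : ℂ)) * ψ w) v
    simp only [hinner]
    rw [MeasureTheory.integral_mul_const]
    have hconj : (∫ v, Complex.exp (2 * Real.pi * Complex.I * ((η ⬝ᵥ v : ℝ) : ℂ)) *
        (starRingEnd ℂ) (ψ v) ∂(volume : Measure (Fin d → ℝ))) = (starRingEnd ℂ) I0 := by
      rw [hI0, ← integral_conj]
      refine integral_congr_ae (Filter.Eventually.of_forall fun v => ?_)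
      show Complex.exp (2 * Real.pi * Complex.I * ((η ⬝ᵥ v : ℝ) : ℂ)) * (starRingEnd ℂ) (ψ v)
          = (starRingEnd ℂ) (Complex.exp (-2 * Real.pi * Complex.I * ((η ⬝ᵥ v : ℝ) : ℂ)) * ψ v)
      rw [_root_.map_mul, ← Complex.exp_conj]
      congr 2
      have : (starRingEnd ℂ) (-2 * (Real.pi : ℂ) * Complex.I * ((η ⬝ᵥ v : ℝ) : ℂ))
          = 2 * (Real.pi : ℂ) * Complex.I * ((η ⬝ᵥ v : ℝ) : ℂ) := by
        simp only [_root_.map_mul, map_neg, Complex.conj_I, Complex.conj_ofReal, map_ofNat]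
        ring
      rw [this]
    rw [hconj]
    have hI0f : I0 = fourierT ψ η := by
      rw [hI0, fourierT]
      congr 1
      funext w
      rw [dotProduct_comm, mul_comm]
    rw [hI0f, mul_comm, Complex.mul_conj, Complex.normSq_eq_norm_sq]
end core

section translate
variable {d : ℕ}

lemma measurable_mulVec (M : Matrix (Fin d) (Fin d) ℝ) :
    Measurable (fun v : Fin d → ℝ => M.mulVec v) :=
  measurable_pi_lambda _ (fun i => measurable_dot (M i))

lemma wigner_translate (ψ : (Fin d → ℝ) → ℂ)
    (hψ : Integrable ψ (volume : Measure (Fin d → ℝ)))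
    (a : Matrix.GeneralLinearGroup (Fin d) ℝ) (x ξ : Fin d → ℝ) :
    Integrable
        (fun q : Fin d → ℝ =>
          wigner ψ (((↑(a⁻¹) : Matrix (Fin d) (Fin d) ℝ)).mulVec (x - q))
            (((↑a : Matrix (Fin d) (Fin d) ℝ))ᵀ.mulVec ξ))
        (volume : Measure (Fin d → ℝ)) ∧
      ∫ q : Fin d → ℝ,
          wigner ψ (((↑(a⁻¹) : Matrix (Fin d) (Fin d) ℝ)).mulVec (x - q))
            (((↑a : Matrix (Fin d) (Fin d) ℝ))ᵀ.mulVec ξ) =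
        ((|(↑a : Matrix (Fin d) (Fin d) ℝ).det| *
            ‖fourierT ψ (((↑a : Matrix (Fin d) (Fin d) ℝ))ᵀ.mulVec ξ)‖ ^ 2 : ℝ) : ℂ) := by
  classical
  set η : Fin d → ℝ := ((↑a : Matrix (Fin d) (Fin d) ℝ))ᵀ.mulVec ξ with hη
  set Ai : Matrix (Fin d) (Fin d) ℝ := (↑(a⁻¹) : Matrix (Fin d) (Fin d) ℝ) with hAi
  obtain ⟨hKi, hKv⟩ := wigner_key ψ hψ η
  have hdet0 : (↑a : Matrix (Fin d) (Fin d) ℝ).det ≠ 0 :=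
    ((Matrix.isUnit_iff_isUnit_det _).mp (Units.isUnit a)).ne_zero
  have hAidet : Ai.det = ((↑a : Matrix (Fin d) (Fin d) ℝ).det)⁻¹ := by
    rw [hAi, Matrix.coe_units_inv, Matrix.det_nonsing_inv, Ring.inverse_eq_inv]
  -- the affine substitution
  have hτ : MeasurePreserving (fun q : Fin d → ℝ => x - q)
      (volume : Measure (Fin d → ℝ)) (volume : Measure (Fin d → ℝ)) := by
    have h := (measurePreserving_add_left (volume : Measure (Fin d → ℝ)) x).comp
      (Measure.measurePreserving_neg (volume : Measure (Fin d → ℝ)))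
    simpa [Function.comp_def, sub_eq_add_neg] using h
  have hLdet : LinearMap.det (Matrix.toLin' Ai) ≠ 0 := by
    rw [LinearMap.det_toLin', hAidet]
    exact inv_ne_zero hdet0
  have hmapL : Measure.map (fun v : Fin d → ℝ => Ai.mulVec v) (volume : Measure (Fin d → ℝ))
      = ENNReal.ofReal |(↑a : Matrix (Fin d) (Fin d) ℝ).det| • (volume : Measure (Fin d → ℝ)) := by
    have h := Measure.map_linearMap_addHaar_eq_smul_addHaar (volume : Measure (Fin d → ℝ)) hLdet
    have hfun : ⇑(Matrix.toLin' Ai) = fun v : Fin d → ℝ => Ai.mulVec v := by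
      funext v; exact Matrix.toLin'_apply Ai v
    rw [hfun] at h
    rw [h, LinearMap.det_toLin', hAidet]
    congr 2
    simp [abs_inv]
  have hTmeas : Measurable (fun q : Fin d → ℝ => Ai.mulVec (x - q)) :=
    (measurable_mulVec Ai).comp (show Measurable fun q : Fin d → ℝ => x - q from measurable_const.sub measurable_id)
  have hmapT : Measure.map (fun q : Fin d → ℝ => Ai.mulVec (x - q))
        (volume : Measure (Fin d → ℝ))
      = ENNReal.ofReal |(↑a : Matrix (Fin d) (Fin d) ℝ).det| • (volume : Measure (Fin d → ℝ)) := by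
    have hcomp : (fun q : Fin d → ℝ => Ai.mulVec (x - q))
        = (fun v : Fin d → ℝ => Ai.mulVec v) ∘ (fun q : Fin d → ℝ => x - q) := rfl
    rw [hcomp, ← Measure.map_map (measurable_mulVec Ai) (show Measurable fun q : Fin d → ℝ => x - q from measurable_const.sub measurable_id),
      hτ.map_eq, hmapL]
  have hsm : AEStronglyMeasurable (fun u => wigner ψ u η)
      (Measure.map (fun q : Fin d → ℝ => Ai.mulVec (x - q)) (volume : Measure (Fin d → ℝ))) := by
    rw [hmapT]
    exact hKi.aestronglyMeasurable.mono_ac Measure.smul_absolutelyContinuous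
  have hIK : Integrable (fun u => wigner ψ u η)
      (Measure.map (fun q : Fin d → ℝ => Ai.mulVec (x - q)) (volume : Measure (Fin d → ℝ))) := by
    rw [hmapT]
    exact hKi.smul_measure ENNReal.ofReal_ne_top
  constructor
  · exact (integrable_map_measure hsm hTmeas.aemeasurable).mp hIK
  · calc ∫ q : Fin d → ℝ, wigner ψ (Ai.mulVec (x - q)) η
        = ∫ u, wigner ψ u η ∂(Measure.map (fun q : Fin d → ℝ => Ai.mulVec (x - q))
            (volume : Measure (Fin d → ℝ))) := (integral_map hTmeas.aemeasurable hsm).symm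
      _ = ∫ u, wigner ψ u η
            ∂(ENNReal.ofReal |(↑a : Matrix (Fin d) (Fin d) ℝ).det| •
              (volume : Measure (Fin d → ℝ))) := by rw [hmapT]
      _ = (ENNReal.ofReal |(↑a : Matrix (Fin d) (Fin d) ℝ).det|).toReal •
            ∫ u, wigner ψ u η := integral_smul_measure _ _
      _ = ((|(↑a : Matrix (Fin d) (Fin d) ℝ).det| * ‖fourierT ψ η‖ ^ 2 : ℝ) : ℂ) := by
          rw [hKv, ENNReal.toReal_ofReal (abs_nonneg _)]
          simp [Complex.real_smul]

end translate

/-- For `ψ ∈ L¹ ∩ L²`, the inner (translation) integral of the Wigner admissibility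
integral of the wavelet group `ℝ^d ⋊ D` can be computed explicitly, and consequently the
Wigner admissibility integral coincides with the Calderón admissibility integral
`∫_D |ψ̂(ᵗa ξ)|² da`. -/
theorem wavelet_wigner_admissibility_eq_calderon
    (d : ℕ) (hd : 1 ≤ d) (ψ : (Fin d → ℝ) → ℂ)
    (hψ1 : Integrable ψ (volume : Measure (Fin d → ℝ)))
    (hψ2 : MemLp ψ 2 (volume : Measure (Fin d → ℝ)))
    (D : Subgroup (Matrix.GeneralLinearGroup (Fin d) ℝ))
    (hD : IsClosed (D : Set (Matrix.GeneralLinearGroup (Fin d) ℝ)))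
    [MeasurableSpace ↥D] [BorelSpace ↥D]
    (da : Measure ↥D) [da.IsHaarMeasure] :
    (∀ a : Matrix.GeneralLinearGroup (Fin d) ℝ, ∀ x ξ : Fin d → ℝ,
      Integrable
        (fun q : Fin d → ℝ =>
          wigner ψ (((↑(a⁻¹) : Matrix (Fin d) (Fin d) ℝ)).mulVec (x - q))
            (((↑a : Matrix (Fin d) (Fin d) ℝ))ᵀ.mulVec ξ))
        (volume : Measure (Fin d → ℝ)) ∧
      ∫ q : Fin d → ℝ,
          wigner ψ (((↑(a⁻¹) : Matrix (Fin d) (Fin d) ℝ)).mulVec (x - q))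
            (((↑a : Matrix (Fin d) (Fin d) ℝ))ᵀ.mulVec ξ) =
        ((|(↑a : Matrix (Fin d) (Fin d) ℝ).det| *
            ‖fourierT ψ (((↑a : Matrix (Fin d) (Fin d) ℝ))ᵀ.mulVec ξ)‖ ^ 2 : ℝ) : ℂ))
    ∧
    (∀ x ξ : Fin d → ℝ,
      ∫⁻ a : ↥D,
          (‖∫ q : Fin d → ℝ,
              wigner ψ
                (((↑((↑a : Matrix.GeneralLinearGroup (Fin d) ℝ)⁻¹) :
                    Matrix (Fin d) (Fin d) ℝ)).mulVec (x - q))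
                (((↑(↑a : Matrix.GeneralLinearGroup (Fin d) ℝ) :
                    Matrix (Fin d) (Fin d) ℝ))ᵀ.mulVec ξ)‖₊ : ℝ≥0∞) *
            ENNReal.ofReal
              (|(↑(↑a : Matrix.GeneralLinearGroup (Fin d) ℝ) :
                  Matrix (Fin d) (Fin d) ℝ).det|⁻¹) ∂da =
        ∫⁻ a : ↥D,
          (‖fourierT ψ
              (((↑(↑a : Matrix.GeneralLinearGroup (Fin d) ℝ) :
                  Matrix (Fin d) (Fin d) ℝ))ᵀ.mulVec ξ)‖₊ : ℝ≥0∞) ^ 2 ∂da) := by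
  constructor
  · exact fun a x ξ => wigner_translate ψ hψ1 a x ξ
  · intro x ξ
    refine lintegral_congr fun a => ?_
    obtain ⟨-, hEq⟩ :=
      wigner_translate ψ hψ1 (↑a : Matrix.GeneralLinearGroup (Fin d) ℝ) x ξ
    rw [hEq]
    set M : Matrix (Fin d) (Fin d) ℝ :=
      (↑(↑a : Matrix.GeneralLinearGroup (Fin d) ℝ) : Matrix (Fin d) (Fin d) ℝ) with hM
    set f : ℂ := fourierT ψ (Mᵀ.mulVec ξ) with hf
    have hdet0 : M.det ≠ 0 :=
      ((Matrix.isUnit_iff_isUnit_det _).mp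
        (Units.isUnit (↑a : Matrix.GeneralLinearGroup (Fin d) ℝ))).ne_zero
    have hnn : (0:ℝ) ≤ |M.det| * ‖f‖ ^ 2 := by positivity
    calc (‖((|M.det| * ‖f‖ ^ 2 : ℝ) : ℂ)‖₊ : ℝ≥0∞) * ENNReal.ofReal |M.det|⁻¹
        = ENNReal.ofReal (|M.det| * ‖f‖ ^ 2) * ENNReal.ofReal |M.det|⁻¹ := by
          rw [Complex.nnnorm_real, ← enorm_eq_nnnorm, Real.enorm_eq_ofReal hnn]
      _ = ENNReal.ofReal (‖f‖ ^ 2) * (ENNReal.ofReal |M.det| * ENNReal.ofReal |M.det|⁻¹) := by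
          rw [ENNReal.ofReal_mul (abs_nonneg _)]; ring
      _ = ENNReal.ofReal (‖f‖ ^ 2) := by
          rw [← ENNReal.ofReal_mul (abs_nonneg _),
            mul_inv_cancel₀ (abs_ne_zero.mpr hdet0), ENNReal.ofReal_one, mul_one]
      _ = (‖f‖₊ : ℝ≥0∞) ^ 2 := by
          rw [ENNReal.ofReal_pow (norm_nonneg _), ofReal_norm, enorm_eq_nnnorm]
end

section
/- Let Φ : ℝ^d → ℝ^d be a quadratic mapping (each component a real polynomial of degree at most 2) whose Jacobian determinant J_Φ does not vanish identically, let S = { x ∈ ℝ^d : J_Φ(x) = 0 }, and let X ⊂ Φ(ℝ^d) \ Φ(S) be an open subset of ℝ^d. Then the following are equivalent: (i) the cardinality of the fiber Φ^{−1}(y) is locally constant for y ∈ X; (ii) the restriction Φ : Φ^{−1}(X) → X is proper, i.e. for every compact set K ⊂ X the set Φ^{−1}(K) is compact. -/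
set_option maxHeartbeats 1000000

open MeasureTheory Topology
open scoped ENNReal

/-- The Jacobian determinant of a map `ℝ^d → ℝ^d`. -/
noncomputable def jacDet {d : ℕ} (Φ : (Fin d → ℝ) → (Fin d → ℝ)) (x : Fin d → ℝ) : ℝ :=
  LinearMap.det (fderiv ℝ Φ x).toLinearMap

section AuxPoly

open MvPolynomial

variable {d : ℕ}

private lemma analyticOnNhd_eval (q : MvPolynomial (Fin d) ℝ) :
    AnalyticOnNhd ℝ (fun x : Fin d → ℝ => MvPolynomial.eval x q) Set.univ := by
  induction q using MvPolynomial.induction_on with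
  | C a => simpa using analyticOnNhd_const
  | add p q hp hq => simpa [MvPolynomial.eval_add, Pi.add_def] using hp.add hq
  | mul_X p i hp =>
      simpa [MvPolynomial.eval_mul] using
        hp.mul ((ContinuousLinearMap.proj i : (Fin d → ℝ) →L[ℝ] ℝ).analyticOnNhd _)

private lemma eq_zero_of_eval_eqOn_open {q : MvPolynomial (Fin d) ℝ} {U : Set (Fin d → ℝ)}
    (hU : IsOpen U) (hne : U.Nonempty) (hz : ∀ y ∈ U, MvPolynomial.eval y q = 0) : q = 0 := by
  obtain ⟨y₀, hy₀⟩ := hne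
  have h := (analyticOnNhd_eval q).eqOn_zero_of_preconnected_of_eventuallyEq_zero
    isPreconnected_univ (Set.mem_univ y₀) ?ev
  · apply MvPolynomial.funext; intro x
    simpa using h (Set.mem_univ x)
  case ev => filter_upwards [hU.mem_nhds hy₀] with y hy using hz y hy

private lemma eval_aeval' {m : ℕ} (g : Fin m → MvPolynomial (Fin d) ℝ) (x : Fin d → ℝ)
    (Q : MvPolynomial (Fin m) ℝ) :
    MvPolynomial.eval x (MvPolynomial.aeval g Q)
      = MvPolynomial.eval (fun j => MvPolynomial.eval x (g j)) Q := by
  induction Q using MvPolynomial.induction_on with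
  | C a => simp
  | add p q hp hq => simp only [map_add, hp, hq]
  | mul_X p i hp => simp only [map_mul, hp, MvPolynomial.aeval_X, MvPolynomial.eval_X]

end AuxPoly


private lemma contDiff_eval {d : ℕ} (q : MvPolynomial (Fin d) ℝ) :
    ContDiff ℝ 1 (fun x : Fin d → ℝ => MvPolynomial.eval x q) := by
  rw [contDiff_iff_contDiffAt]
  intro x
  exact ((analyticOnNhd_eval q) x (Set.mem_univ x)).contDiffAt

private lemma exists_annihilating (hd : 1 ≤ d) (g : Fin (d + 1) → MvPolynomial (Fin d) ℝ)
    (hdeg : ∀ j, (g j).totalDegree ≤ 2) :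
    ∃ Q : MvPolynomial (Fin (d + 1)) ℝ, Q ≠ 0 ∧ MvPolynomial.aeval g Q = 0 := by
  by_contra hcon
  push_neg at hcon
  have hker : LinearMap.ker (MvPolynomial.aeval (R := ℝ) g).toLinearMap = ⊥ := by
    rw [LinearMap.ker_eq_bot']
    intro Q hQ
    by_contra h0
    exact hcon Q h0 hQ
  set c : ℕ := (2 * d + 3) ^ d with hc
  have hcpos : 0 < c := pow_pos (by omega : 0 < 2 * d + 3) d
  set M : ℕ := c - 1 with hM
  set N : ℕ := (d + 1) * M with hN
  -- the linearly independent family of monomials in `g`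
  set m : (Fin (d + 1) → Fin (M + 1)) → ((Fin (d + 1)) →₀ ℕ) :=
    fun e => Finsupp.equivFunOnFinite.symm (fun i => (e i : ℕ)) with hm
  have hminj : Function.Injective m := by
    intro e e' h
    have := Finsupp.equivFunOnFinite.symm.injective h
    funext i
    exact Fin.val_injective (congrFun this i)
  set P : (Fin (d + 1) → Fin (M + 1)) → MvPolynomial (Fin (d + 1)) ℝ :=
    fun e => MvPolynomial.monomial (m e) 1 with hP
  have hPli : LinearIndependent ℝ P := by
    have h := (MvPolynomial.basisMonomials (Fin (d + 1)) ℝ).linearIndependent.comp m hminj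
    rwa [MvPolynomial.coe_basisMonomials] at h
  have hWli : LinearIndependent ℝ ((MvPolynomial.aeval (R := ℝ) g).toLinearMap ∘ P) :=
    hPli.map' _ hker
  -- the image lands in polynomials of total degree at most 2 * N
  set V : Submodule ℝ (MvPolynomial (Fin d) ℝ) := MvPolynomial.restrictTotalDegree (Fin d) ℝ (2 * N) with hV
  have hmem : ∀ e, MvPolynomial.aeval g (P e) ∈ V := by
    intro e
    rw [MvPolynomial.mem_restrictTotalDegree]
    have : MvPolynomial.aeval g (P e) = (m e).prod fun i k => g i ^ k := by
      rw [hP, MvPolynomial.aeval_monomial]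
      simp
    rw [this]
    refine le_trans (MvPolynomial.totalDegree_finset_prod _ _) ?_
    have h1 : ∀ i ∈ (m e).support, ((g i) ^ ((m e) i)).totalDegree ≤ 2 * (m e) i := by
      intro i _
      refine le_trans (MvPolynomial.totalDegree_pow _ _) ?_
      calc (m e) i * (g i).totalDegree ≤ (m e) i * 2 :=
            Nat.mul_le_mul_left _ (hdeg i)
        _ = 2 * (m e) i := Nat.mul_comm _ _
    refine le_trans (Finset.sum_le_sum h1) ?_
    rw [← Finset.mul_sum]
    have h2 : ∑ i ∈ (m e).support, (m e) i ≤ N := by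
      have h3 : ∑ i ∈ (m e).support, (m e) i ≤ ∑ i : Fin (d + 1), (m e) i :=
        Finset.sum_le_sum_of_subset (Finset.subset_univ _)
      refine le_trans h3 ?_
      have h4 : ∀ i : Fin (d + 1), (m e) i ≤ M := fun i => Nat.lt_succ_iff.mp (e i).2
      calc ∑ i : Fin (d + 1), (m e) i ≤ ∑ _i : Fin (d + 1), M := Finset.sum_le_sum fun i _ => h4 i
        _ = (d + 1) * M := by simp [Finset.sum_const, Nat.mul_comm]
    exact Nat.mul_le_mul_left _ h2
  set v : (Fin (d + 1) → Fin (M + 1)) → V := fun e => ⟨_, hmem e⟩ with hv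
  have hvli : LinearIndependent ℝ v := by
    apply LinearIndependent.of_comp V.subtype
    exact hWli
  -- the submodule has a finite monomial basis
  set s : Set (Fin d →₀ ℕ) := { n | (n.sum fun _ e => e) ≤ 2 * N } with hs
  have hsfin : s.Finite := by
    have h1 : {f : Fin d →₀ ℕ | ∀ a, f a ≤ 2 * N}.Finite :=
      (Set.Finite.pi' fun _ ↦ Set.finite_le_nat _).preimage DFunLike.coe_injective.injOn
    refine h1.subset fun n hn i => ?_
    rcases eq_or_ne (n i) 0 with h | h
    · omega
    · exact le_trans (Finset.single_le_sum (fun _ _ => Nat.zero_le _)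
        (Finsupp.mem_support_iff.mpr h)) hn
  haveI : Fintype ↥s := hsfin.fintype
  have b : Module.Basis ↥s ℝ V := MvPolynomial.basisRestrictSupport ℝ s
  have hfr : Module.finrank ℝ V = Fintype.card ↥s := Module.finrank_eq_card_basis b
  have hcard1 : Fintype.card (Fin (d + 1) → Fin (M + 1)) ≤ Module.finrank ℝ V :=
    hvli.fintype_card_le_finrank
  have hbound : ∀ (n : ↥s) (i : Fin d), n.1 i < 2 * N + 1 := by
    intro n i
    have hn : (n.1.sum fun _ e => e) ≤ 2 * N := n.2
    have hle : n.1 i ≤ 2 * N := by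
      rcases eq_or_ne (n.1 i) 0 with h | h
      · omega
      · exact le_trans (Finset.single_le_sum (fun _ _ => Nat.zero_le _)
          (Finsupp.mem_support_iff.mpr h)) hn
    omega
  have hcard2 : Fintype.card ↥s ≤ (2 * N + 1) ^ d := by
    have hinj : Function.Injective
        (fun (n : ↥s) (i : Fin d) => (⟨n.1 i, hbound n i⟩ : Fin (2 * N + 1))) := by
      intro n n' h
      apply Subtype.ext
      apply Finsupp.ext
      intro i
      exact congrArg Fin.val (congrFun h i)
    calc Fintype.card ↥s ≤ Fintype.card (Fin d → Fin (2 * N + 1)) :=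
          Fintype.card_le_of_injective _ hinj
      _ = (2 * N + 1) ^ d := by simp [Fintype.card_fun]
  have hcard3 : Fintype.card (Fin (d + 1) → Fin (M + 1)) = (M + 1) ^ (d + 1) := by
    simp [Fintype.card_fun]
  have hM1 : M + 1 = c := by omega
  have h1 : 2 * N + 1 < (2 * d + 3) * c := by
    rw [← hM1, hN]
    have hexp : (2 * d + 3) * (M + 1) = 2 * (d * M) + 2 * d + 3 * M + 3 := by ring
    have hexp2 : 2 * ((d + 1) * M) + 1 = 2 * (d * M) + 2 * M + 1 := by ring
    omega
  have h2 : (2 * N + 1) ^ d < ((2 * d + 3) * c) ^ d :=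
    Nat.pow_lt_pow_left h1 (by omega)
  have h3 : ((2 * d + 3) * c) ^ d = c ^ (d + 1) := by
    rw [Nat.mul_pow, ← hc, ← pow_succ']
  have : c ^ (d + 1) ≤ (2 * N + 1) ^ d := by
    calc c ^ (d + 1) = (M + 1) ^ (d + 1) := by rw [hM1]
      _ = Fintype.card (Fin (d + 1) → Fin (M + 1)) := hcard3.symm
      _ ≤ Module.finrank ℝ V := hcard1
      _ = Fintype.card ↥s := hfr
      _ ≤ (2 * N + 1) ^ d := hcard2
  omega

private lemma generic_finite (hd : 1 ≤ d) (Φ : (Fin d → ℝ) → (Fin d → ℝ))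
    (p : Fin d → MvPolynomial (Fin d) ℝ) (hpdeg : ∀ i, (p i).totalDegree ≤ 2)
    (hp : ∀ i x, Φ x i = MvPolynomial.eval x (p i)) :
    ∃ q : MvPolynomial (Fin d) ℝ, q ≠ 0 ∧
      ∀ y, MvPolynomial.eval y q ≠ 0 → (Φ ⁻¹' {y}).Finite := by
  have hcoord : ∀ i : Fin d, ∃ q : MvPolynomial (Fin d) ℝ, q ≠ 0 ∧
      ∀ y : Fin d → ℝ, MvPolynomial.eval y q ≠ 0 →
        {t : ℝ | ∃ x, Φ x = y ∧ x i = t}.Finite := by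
    intro i
    set g : Fin (d + 1) → MvPolynomial (Fin d) ℝ := Fin.cons (MvPolynomial.X i) p with hg
    have hgdeg : ∀ j, (g j).totalDegree ≤ 2 := by
      intro j
      refine Fin.cases ?_ ?_ j
      · rw [hg]
        simp [MvPolynomial.totalDegree_X]
      · intro k
        rw [hg]
        simpa using hpdeg k
    obtain ⟨Q, hQ0, hQa⟩ := exists_annihilating hd g hgdeg
    set Q' : Polynomial (MvPolynomial (Fin d) ℝ) := MvPolynomial.finSuccEquiv ℝ d Q with hQ'
    have hQ'0 : Q' ≠ 0 := by
      intro h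
      apply hQ0
      have := congrArg (MvPolynomial.finSuccEquiv ℝ d).symm h
      simpa [hQ'] using this
    refine ⟨Q'.leadingCoeff, Polynomial.leadingCoeff_ne_zero.mpr hQ'0, ?_⟩
    intro y hy
    set Ry : Polynomial ℝ := Q'.map (MvPolynomial.eval y) with hRy
    have hRy0 : Ry ≠ 0 := by
      intro h
      apply hy
      have := congrArg (fun r => Polynomial.coeff r Q'.natDegree) h
      simpa [hRy, Polynomial.coeff_map] using this
    refine (Polynomial.finite_setOf_isRoot hRy0).subset ?_
    rintro t ⟨x, hxy, rfl⟩
    have h1 : MvPolynomial.eval x (MvPolynomial.aeval g Q) = 0 := by rw [hQa]; simp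
    have h2 : (fun j => MvPolynomial.eval x (g j)) = Fin.cons (x i) y := by
      funext j
      refine Fin.cases ?_ ?_ j
      · simp [hg]
      · intro k
        rw [hg]
        simp only [Fin.cons_succ]
        rw [← hp k x, hxy]
    have h3 : MvPolynomial.eval (Fin.cons (x i) y : Fin (d + 1) → ℝ) Q = 0 := by
      rw [← h2, ← eval_aeval' g x Q, h1]
    have h4 := MvPolynomial.eval_eq_eval_mv_eval' y (x i) Q
    show Polynomial.IsRoot Ry (x i)
    rw [Polynomial.IsRoot, hRy, hQ', ← h4, h3]
  choose qi hqi0 hqifin using hcoord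
  refine ⟨∏ i : Fin d, qi i, Finset.prod_ne_zero_iff.mpr fun i _ => hqi0 i, ?_⟩
  intro y hy
  have hyi : ∀ i : Fin d, MvPolynomial.eval y (qi i) ≠ 0 := by
    intro i hzero
    apply hy
    rw [map_prod]
    exact Finset.prod_eq_zero (Finset.mem_univ i) hzero
  have hsub : (Φ ⁻¹' {y}) ⊆ Set.pi Set.univ (fun i => {t : ℝ | ∃ x, Φ x = y ∧ x i = t}) := by
    intro x hx
    rw [Set.mem_preimage, Set.mem_singleton_iff] at hx
    intro i _
    exact ⟨x, hx, rfl⟩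
  exact (Set.Finite.pi fun i => hqifin i y (hyi i)).subset hsub

private lemma sheet_exists {d : ℕ} {Φ : (Fin d → ℝ) → (Fin d → ℝ)}
    (hcd : ContDiff ℝ 1 Φ) {a : Fin d → ℝ} (hreg : jacDet Φ a ≠ 0) {r : ℝ} (hr : 0 < r) :
    ∃ (U T : Set (Fin d → ℝ)) (ψ : (Fin d → ℝ) → (Fin d → ℝ)),
      IsOpen U ∧ a ∈ U ∧ U ⊆ Metric.ball a r ∧ IsOpen T ∧ Φ a ∈ T ∧
      Set.InjOn Φ U ∧ ∀ y ∈ T, ψ y ∈ U ∧ Φ (ψ y) = y := by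
  classical
  set L : (Fin d → ℝ) →L[ℝ] (Fin d → ℝ) := fderiv ℝ Φ a with hL
  have hdet : LinearMap.det L.toLinearMap ≠ 0 := hreg
  set E₀ : (Fin d → ℝ) ≃ₗ[ℝ] (Fin d → ℝ) := LinearMap.equivOfDetNeZero L.toLinearMap hdet with hE₀
  set E' : (Fin d → ℝ) ≃L[ℝ] (Fin d → ℝ) := E₀.toContinuousLinearEquiv with hE'
  have hcoe : ((E' : (Fin d → ℝ) ≃L[ℝ] (Fin d → ℝ)) : (Fin d → ℝ) →L[ℝ] (Fin d → ℝ)) = L := by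
    apply ContinuousLinearMap.ext
    intro v
    show E' v = L v
    rw [hE']
    rw [LinearEquiv.coe_toContinuousLinearEquiv']
    rfl
  have hstrict : HasStrictFDerivAt Φ L a := by
    have := (hcd.contDiffAt (x := a)).hasStrictFDerivAt one_ne_zero
    exact this
  have hstrict' : HasStrictFDerivAt Φ
      ((E' : (Fin d → ℝ) ≃L[ℝ] (Fin d → ℝ)) : (Fin d → ℝ) →L[ℝ] (Fin d → ℝ)) a := by
    rw [hcoe]; exact hstrict
  set e0 : OpenPartialHomeomorph (Fin d → ℝ) (Fin d → ℝ) := HasStrictFDerivAt.toOpenPartialHomeomorph Φ hstrict' with he0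
  have he0coe : ⇑e0 = Φ := HasStrictFDerivAt.toOpenPartialHomeomorph_coe hstrict'
  have he0src : a ∈ e0.source := HasStrictFDerivAt.mem_toOpenPartialHomeomorph_source hstrict'
  set e : OpenPartialHomeomorph (Fin d → ℝ) (Fin d → ℝ) := e0.restrOpen (Metric.ball a r)
    Metric.isOpen_ball with he
  have hecoe : ⇑e = Φ := he0coe
  have hesrc : e.source = e0.source ∩ Metric.ball a r := e0.restrOpen_source _ _
  have hasrc : a ∈ e.source := by
    rw [hesrc]
    exact ⟨he0src, Metric.mem_ball_self hr⟩
  refine ⟨e.source, e.target, e.symm, e.open_source, hasrc, ?_, e.open_target, ?_, ?_, ?_⟩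
  · rw [hesrc]; exact Set.inter_subset_right
  · have := e.map_source hasrc
    rwa [hecoe] at this
  · have := e.injOn
    rwa [hecoe] at this
  · intro y hy
    refine ⟨e.map_target hy, ?_⟩
    have := e.right_inv hy
    rwa [hecoe] at this

private lemma sheets_family {d : ℕ} {Φ : (Fin d → ℝ) → (Fin d → ℝ)}
    (hcd : ContDiff ℝ 1 Φ) {X : Set (Fin d → ℝ)}
    (hreg : ∀ a : Fin d → ℝ, Φ a ∈ X → jacDet Φ a ≠ 0) {y : Fin d → ℝ} (hyX : y ∈ X)
    (hFfin : (Φ ⁻¹' {y}).Finite) :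
    ∃ (U T : ↥(Φ ⁻¹' {y}) → Set (Fin d → ℝ))
      (ψ : ↥(Φ ⁻¹' {y}) → (Fin d → ℝ) → (Fin d → ℝ)),
      (∀ i, IsOpen (U i)) ∧ (∀ i, i.1 ∈ U i) ∧ (∀ i, IsOpen (T i)) ∧ (∀ i, y ∈ T i) ∧
      (∀ i, Set.InjOn Φ (U i)) ∧ (∀ i y', y' ∈ T i → ψ i y' ∈ U i ∧ Φ (ψ i y') = y') ∧
      (∀ i j, i ≠ j → Disjoint (U i) (U j)) ∧ (∀ i z, z ∈ U i → ‖z‖ ≤ ‖i.1‖ + 1) := by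
  classical
  haveI : Fintype ↥(Φ ⁻¹' {y}) := hFfin.fintype
  set F := Φ ⁻¹' {y} with hF
  have hmemy : ∀ i : ↥F, Φ i.1 = y := fun i => i.2
  have hmemX : ∀ i : ↥F, Φ i.1 ∈ X := fun i => by rw [hmemy i]; exact hyX
  -- radii
  have hrad : ∀ i : ↥F, ∃ ra : ℝ, 0 < ra ∧ ra ≤ 1 ∧ ∀ j : ↥F, j ≠ i → ra ≤ dist i.1 j.1 := by
    intro i
    set t : Finset ↥F := Finset.univ.erase i with ht
    by_cases hne : t.Nonempty
    · refine ⟨min 1 (t.inf' hne fun j => dist i.1 j.1), ?_, min_le_left _ _, ?_⟩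
      · refine lt_min one_pos ?_
        rw [Finset.lt_inf'_iff]
        intro j hj
        have hji : j ≠ i := Finset.ne_of_mem_erase hj
        have : i.1 ≠ j.1 := fun h => hji (Subtype.ext h.symm)
        exact dist_pos.mpr this
      · intro j hji
        exact le_trans (min_le_right _ _)
          (Finset.inf'_le _ (Finset.mem_erase.mpr ⟨hji, Finset.mem_univ j⟩))
    · refine ⟨1, one_pos, le_rfl, ?_⟩
      intro j hji
      exact absurd (Finset.mem_erase.mpr ⟨hji, Finset.mem_univ j⟩) (fun h => hne ⟨j, h⟩)
  choose rad hrpos hrle1 hrdist using hrad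
  have hsheet : ∀ i : ↥F, ∃ (U T : Set (Fin d → ℝ)) (ψ : (Fin d → ℝ) → (Fin d → ℝ)),
      IsOpen U ∧ i.1 ∈ U ∧ U ⊆ Metric.ball i.1 (rad i / 2) ∧ IsOpen T ∧ Φ i.1 ∈ T ∧
      Set.InjOn Φ U ∧ ∀ y' ∈ T, ψ y' ∈ U ∧ Φ (ψ y') = y' :=
    fun i => sheet_exists hcd (hreg i.1 (hmemX i)) (half_pos (hrpos i))
  choose U T ψ hUopen hiU hUball hTopen hyT hUinj hψ using hsheet
  have hyT' : ∀ i : ↥F, y ∈ T i := fun i => by have := hyT i; rwa [hmemy i] at this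
  refine ⟨U, T, ψ, hUopen, hiU, hTopen, hyT', hUinj, fun i y' h => hψ i y' h, ?_, ?_⟩
  · intro i j hij
    rw [Set.disjoint_left]
    intro z hzi hzj
    have h1 : dist z i.1 < rad i / 2 := Metric.mem_ball.mp (hUball i hzi)
    have h2 : dist z j.1 < rad j / 2 := Metric.mem_ball.mp (hUball j hzj)
    have h3 : rad i ≤ dist i.1 j.1 := hrdist i j (fun h => hij h.symm)
    have h4 : rad j ≤ dist j.1 i.1 := hrdist j i hij
    have h5 : dist i.1 j.1 ≤ dist z i.1 + dist z j.1 := by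
      calc dist i.1 j.1 ≤ dist i.1 z + dist z j.1 := dist_triangle _ _ _
        _ = dist z i.1 + dist z j.1 := by rw [dist_comm i.1 z]
    rw [dist_comm j.1 i.1] at h4
    linarith
  · intro i z hz
    have h1 : dist z i.1 < rad i / 2 := Metric.mem_ball.mp (hUball i hz)
    have h2 : rad i ≤ 1 := hrle1 i
    have h3 : ‖z‖ ≤ dist z i.1 + ‖i.1‖ := by
      calc ‖z‖ = dist z 0 := by rw [dist_zero_right]
        _ ≤ dist z i.1 + dist i.1 0 := dist_triangle _ _ _
        _ = dist z i.1 + ‖i.1‖ := by rw [dist_zero_right]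
    linarith

private lemma proper_implies_locconst {d : ℕ} {Φ : (Fin d → ℝ) → (Fin d → ℝ)}
    (hcd : ContDiff ℝ 1 Φ) {X : Set (Fin d → ℝ)} (hXopen : IsOpen X)
    (hreg : ∀ a : Fin d → ℝ, Φ a ∈ X → jacDet Φ a ≠ 0)
    (hprop : ∀ K : Set (Fin d → ℝ), K ⊆ X → IsCompact K → IsCompact (Φ ⁻¹' K))
    {y : Fin d → ℝ} (hyX : y ∈ X) :
    ∃ U : Set (Fin d → ℝ), IsOpen U ∧ y ∈ U ∧ U ⊆ X ∧
      ∀ y' ∈ U, Nat.card (Φ ⁻¹' {y'}) = Nat.card (Φ ⁻¹' {y}) := by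
  classical
  have hcont : Continuous Φ := hcd.continuous
  set F := Φ ⁻¹' {y} with hF
  have hFcomp : IsCompact F := hprop {y} (by simpa using hyX) isCompact_singleton
  have hmemy : ∀ i : ↥F, Φ i.1 = y := fun i => i.2
  have hmemX : ∀ i : ↥F, Φ i.1 ∈ X := fun i => by rw [hmemy i]; exact hyX
  -- F is finite
  have hFfin : F.Finite := by
    have hcover : ∀ i : ↥F, ∃ V : Set (Fin d → ℝ), IsOpen V ∧ i.1 ∈ V ∧ Set.InjOn Φ V := by
      intro i
      obtain ⟨U, T, ψ, hUo, haU, _, _, _, hinj, _⟩ :=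
        sheet_exists hcd (hreg i.1 (hmemX i)) one_pos
      exact ⟨U, hUo, haU, hinj⟩
    choose V hVopen haV hVinj using hcover
    obtain ⟨t, ht⟩ := hFcomp.elim_finite_subcover V hVopen
      (fun x hx => Set.mem_iUnion.mpr ⟨⟨x, hx⟩, haV ⟨x, hx⟩⟩)
    refine Set.Finite.subset (t.finite_toSet.image Subtype.val) ?_
    intro x hx
    obtain ⟨i, hit, hxV⟩ := Set.mem_iUnion₂.mp (ht hx)
    have hxy : Φ x = y := hx
    have : x = i.1 := hVinj i hxV (haV i) (by rw [hxy, hmemy i])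
    exact ⟨i, hit, this.symm⟩
  haveI : Fintype ↥F := hFfin.fintype
  obtain ⟨U, T, ψ, hUopen, hiU, hTopen, hyT, hUinj, hψ, hdisj, _⟩ :=
    sheets_family hcd hreg hyX hFfin
  -- a closed ball around y inside X
  obtain ⟨r₀, hr₀pos, hball⟩ : ∃ r₀ > 0, Metric.closedBall y r₀ ⊆ X := by
    rcases Metric.isOpen_iff.mp hXopen y hyX with ⟨ε, hε, hsub⟩
    exact ⟨ε / 2, half_pos hε,
      le_trans (Metric.closedBall_subset_ball (half_lt_self hε)) hsub⟩
  set C := Φ ⁻¹' (Metric.closedBall y r₀) \ ⋃ i : ↥F, U i with hC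
  have hCcomp : IsCompact C :=
    (hprop _ hball (isCompact_closedBall y r₀)).diff (isOpen_iUnion hUopen)
  have hynim : y ∉ Φ '' C := by
    rintro ⟨z, hzC, hzy⟩
    exact hzC.2 (Set.mem_iUnion.mpr ⟨⟨z, hzy⟩, hiU ⟨z, hzy⟩⟩)
  have hCim : IsCompact (Φ '' C) := hCcomp.image hcont
  obtain ⟨ε, hεpos, hεball⟩ : ∃ ε > 0, ∀ w ∈ Metric.ball y ε, w ∉ Φ '' C := by
    have hopen : IsOpen (Φ '' C)ᶜ := hCim.isClosed.isOpen_compl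
    rcases Metric.isOpen_iff.mp hopen y hynim with ⟨ε, hε, hsub⟩
    exact ⟨ε, hε, fun w hw => hsub hw⟩
  set W := Metric.ball y (min ε r₀) ∩ ⋂ i : ↥F, T i with hW
  have hWopen : IsOpen W := Metric.isOpen_ball.inter (isOpen_iInter_of_finite hTopen)
  have hyW : y ∈ W :=
    ⟨Metric.mem_ball_self (lt_min hεpos hr₀pos), Set.mem_iInter.mpr hyT⟩
  have hWX : W ⊆ X := by
    intro w hw
    apply hball
    have := Metric.mem_ball.mp hw.1
    exact Metric.mem_closedBall.mpr (le_of_lt (lt_of_lt_of_le this (min_le_right _ _)))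
  refine ⟨W, hWopen, hyW, hWX, ?_⟩
  intro y' hy'
  have hy'T : ∀ i : ↥F, y' ∈ T i := fun i => Set.mem_iInter.mp hy'.2 i
  have hmain : ∀ i : ↥F, ψ i y' ∈ U i ∧ Φ (ψ i y') = y' := fun i => hψ i y' (hy'T i)
  set g : ↥F → ↥(Φ ⁻¹' {y'}) := fun i => ⟨ψ i y', (hmain i).2⟩ with hg
  have hgbij : Function.Bijective g := by
    constructor
    · intro i j hij
      by_contra hne
      have h1 : ψ i y' ∈ U i := (hmain i).1
      have h2 : ψ j y' ∈ U j := (hmain j).1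
      have hval : ψ i y' = ψ j y' := congrArg Subtype.val hij
      rw [hval] at h1
      exact Set.disjoint_left.mp (hdisj i j hne) h1 h2
    · rintro ⟨z, hz⟩
      have hzy' : Φ z = y' := hz
      have hzball : z ∈ Φ ⁻¹' (Metric.closedBall y r₀) := by
        have : dist y' y < min ε r₀ := Metric.mem_ball.mp hy'.1
        have : dist (Φ z) y ≤ r₀ := by rw [hzy']; exact le_of_lt (lt_of_lt_of_le this (min_le_right _ _))
        exact Metric.mem_closedBall.mpr this
      have hzU : z ∈ ⋃ i : ↥F, U i := by
        by_contra hzn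
        have hzC : z ∈ C := ⟨hzball, hzn⟩
        have : y' ∈ Φ '' C := ⟨z, hzC, hzy'⟩
        exact hεball y' (Metric.mem_ball.mp (lt_of_lt_of_le (Metric.mem_ball.mp hy'.1) (min_le_left _ _)) |> Metric.mem_ball.mpr) this
      obtain ⟨i, hiUz⟩ := Set.mem_iUnion.mp hzU
      refine ⟨i, ?_⟩
      apply Subtype.ext
      show ψ i y' = z
      apply hUinj i (hmain i).1 hiUz
      rw [(hmain i).2, hzy']
  exact (Nat.card_eq_of_bijective g hgbij).symm

private lemma locconst_implies_proper {d : ℕ} {Φ : (Fin d → ℝ) → (Fin d → ℝ)}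
    (hcd : ContDiff ℝ 1 Φ) {X : Set (Fin d → ℝ)} (hXopen : IsOpen X)
    (hXrange : X ⊆ Set.range Φ)
    (hreg : ∀ a : Fin d → ℝ, Φ a ∈ X → jacDet Φ a ≠ 0)
    {q : MvPolynomial (Fin d) ℝ} (hq0 : q ≠ 0)
    (hqfin : ∀ y, MvPolynomial.eval y q ≠ 0 → (Φ ⁻¹' {y}).Finite)
    (hvanish : ∀ {U : Set (Fin d → ℝ)}, IsOpen U → U.Nonempty →
      (∀ y ∈ U, MvPolynomial.eval y q = 0) → q = 0)
    (hloc : ∀ y ∈ X, ∃ U : Set (Fin d → ℝ), IsOpen U ∧ y ∈ U ∧ U ⊆ X ∧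
      ∀ y' ∈ U, Nat.card (Φ ⁻¹' {y'}) = Nat.card (Φ ⁻¹' {y}))
    {K : Set (Fin d → ℝ)} (hKX : K ⊆ X) (hK : IsCompact K) : IsCompact (Φ ⁻¹' K) := by
  classical
  have hcont : Continuous Φ := hcd.continuous
  refine Metric.isCompact_of_isClosed_isBounded (hK.isClosed.preimage hcont) ?_
  by_contra hb
  rw [isBounded_iff_forall_norm_le] at hb
  push_neg at hb
  have hseq : ∀ n : ℕ, ∃ x : Fin d → ℝ, Φ x ∈ K ∧ (n : ℝ) < ‖x‖ := by
    intro n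
    obtain ⟨x, hx1, hx2⟩ := hb n
    exact ⟨x, hx1, hx2⟩
  choose xs hxsK hxsn using hseq
  obtain ⟨y, hyK, σ, hσ, htend⟩ := hK.tendsto_subseq hxsK
  have hyX : y ∈ X := hKX hyK
  obtain ⟨V, hVopen, hyV, hVX, hVcard⟩ := hloc y hyX
  set F := Φ ⁻¹' {y} with hF
  have hFne : F.Nonempty := by
    obtain ⟨x, hx⟩ := hXrange hyX
    exact ⟨x, hx⟩
  -- the fiber over y is finite
  have hFfin : F.Finite := by
    by_contra hinf
    have hFinf : F.Infinite := hinf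
    haveI := hFinf.to_subtype
    have hzero : Nat.card ↥F = 0 := Nat.card_eq_zero_of_infinite
    have hex : ∃ y'' ∈ V, MvPolynomial.eval y'' q ≠ 0 := by
      by_contra h
      push_neg at h
      exact hq0 (hvanish hVopen ⟨y, hyV⟩ h)
    obtain ⟨y'', hy''V, hy''q⟩ := hex
    have hfin2 : (Φ ⁻¹' {y''}).Finite := hqfin y'' hy''q
    have hne2 : (Φ ⁻¹' {y''}).Nonempty := by
      obtain ⟨x, hx⟩ := hXrange (hVX hy''V)
      exact ⟨x, hx⟩
    haveI := hfin2.to_subtype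
    haveI := hne2.to_subtype
    have hpos : 0 < Nat.card ↥(Φ ⁻¹' {y''}) := Nat.card_pos
    rw [hVcard y'' hy''V, hzero] at hpos
    exact lt_irrefl 0 hpos
  haveI := hFfin.to_subtype
  haveI := hFne.to_subtype
  set n := Nat.card ↥F with hn
  have hnpos : 0 < n := Nat.card_pos
  obtain ⟨U, T, ψ, hUopen, hiU, hTopen, hyT, hUinj, hψ, hdisj, hUbd⟩ :=
    sheets_family hcd hreg hyX hFfin
  -- a bound for all the sheets
  obtain ⟨R, hR⟩ : ∃ R : ℝ, ∀ i : ↥F, ∀ z ∈ U i, ‖z‖ ≤ R := by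
    obtain ⟨R₀, hR₀⟩ := isBounded_iff_forall_norm_le.mp hFfin.isBounded
    refine ⟨R₀ + 1, fun i z hz => ?_⟩
    have h1 := hUbd i z hz
    have h2 : ‖i.1‖ ≤ R₀ := hR₀ i.1 i.2
    linarith
  -- choose an index far out with image close to y
  have hev1 : ∀ᶠ k in Filter.atTop, Φ (xs (σ k)) ∈ V ∩ ⋂ i : ↥F, T i :=
    htend.eventually ((hVopen.inter (isOpen_iInter_of_finite hTopen)).eventually_mem
      ⟨hyV, Set.mem_iInter.mpr hyT⟩)
  have hev2 : ∀ᶠ k in Filter.atTop, R < ‖xs (σ k)‖ := by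
    refine Filter.eventually_atTop.mpr ⟨⌈R⌉₊ + 1, fun k hk => ?_⟩
    have h1 : (σ k : ℝ) < ‖xs (σ k)‖ := hxsn (σ k)
    have h2 : k ≤ σ k := hσ.le_apply
    have h3 : R ≤ (⌈R⌉₊ : ℝ) := Nat.le_ceil R
    have h4 : (⌈R⌉₊ : ℝ) < (k : ℝ) := by exact_mod_cast hk
    have h5 : (k : ℝ) ≤ (σ k : ℝ) := by exact_mod_cast h2
    linarith
  obtain ⟨k, hkT, hkR⟩ := (hev1.and hev2).exists
  set y' := Φ (xs (σ k)) with hy'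
  have hy'V : y' ∈ V := hkT.1
  have hy'T : ∀ i : ↥F, y' ∈ T i := fun i => Set.mem_iInter.mp hkT.2 i
  have hcardy' : Nat.card ↥(Φ ⁻¹' {y'}) = n := hVcard y' hy'V
  haveI hfin' : Finite ↥(Φ ⁻¹' {y'}) := Nat.finite_of_card_ne_zero (by omega)
  set h : Option ↥F → ↥(Φ ⁻¹' {y'}) := fun o =>
    Option.elim o ⟨xs (σ k), rfl⟩ (fun i => ⟨ψ i y', (hψ i y' (hy'T i)).2⟩) with hh
  have hinj : Function.Injective h := by
    intro o1 o2 heq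
    match o1, o2 with
    | none, none => rfl
    | none, some i =>
        exfalso
        have hval : xs (σ k) = ψ i y' := congrArg Subtype.val heq
        have h1 : ‖ψ i y'‖ ≤ R := hR i _ (hψ i y' (hy'T i)).1
        rw [← hval] at h1
        linarith
    | some i, none =>
        exfalso
        have hval : ψ i y' = xs (σ k) := congrArg Subtype.val heq
        have h1 : ‖ψ i y'‖ ≤ R := hR i _ (hψ i y' (hy'T i)).1
        rw [hval] at h1
        linarith
    | some i, some j =>
        congr 1
        by_contra hne
        have hval : ψ i y' = ψ j y' := congrArg Subtype.val heq
        have h1 : ψ i y' ∈ U i := (hψ i y' (hy'T i)).1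
        have h2 : ψ j y' ∈ U j := (hψ j y' (hy'T j)).1
        rw [hval] at h1
        exact Set.disjoint_left.mp (hdisj i j hne) h1 h2
  have hle := Nat.card_le_card_of_injective h hinj
  rw [Finite.card_option, hcardy'] at hle
  omega

/-- For a quadratic map `Φ : ℝ^d → ℝ^d` with not identically vanishing Jacobian,
and an open set `X ⊆ Φ(ℝ^d) \\ Φ(S)` (where `S` is the critical set),
local constancy of the fiber cardinality over `X` is equivalent to properness of
the restriction `Φ : Φ⁻¹(X) → X`. -/
theorem locally_constant_fibers_iff_proper
    (d : ℕ) (hd : 1 ≤ d) (Φ : (Fin d → ℝ) → (Fin d → ℝ))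
    (hpoly : ∀ i : Fin d, ∃ p : MvPolynomial (Fin d) ℝ,
      p.totalDegree ≤ 2 ∧ ∀ x : Fin d → ℝ, Φ x i = MvPolynomial.eval x p)
    (hne : ∃ x : Fin d → ℝ, jacDet Φ x ≠ 0)
    (S : Set (Fin d → ℝ)) (hS : S = {x : Fin d → ℝ | jacDet Φ x = 0})
    (X : Set (Fin d → ℝ)) (hXopen : IsOpen X)
    (hX : X ⊆ Set.range Φ \ (Φ '' S)) :
    ((∀ y ∈ X, ∃ U : Set (Fin d → ℝ), IsOpen U ∧ y ∈ U ∧ U ⊆ X ∧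
        ∀ y' ∈ U, Nat.card (Φ ⁻¹' {y'}) = Nat.card (Φ ⁻¹' {y}))
      ↔
      (∀ K : Set (Fin d → ℝ), K ⊆ X → IsCompact K → IsCompact (Φ ⁻¹' K))) := by
  classical
  choose p hpdeg hp using hpoly
  have hcd : ContDiff ℝ 1 Φ := by
    rw [contDiff_pi]
    intro i
    have hcoord : (fun x : Fin d → ℝ => Φ x i) = fun x => MvPolynomial.eval x (p i) :=
      funext (hp i)
    rw [hcoord]
    exact contDiff_eval (p i)
  have hreg : ∀ a : Fin d → ℝ, Φ a ∈ X → jacDet Φ a ≠ 0 := by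
    intro a ha hjac
    have haS : a ∈ S := by rw [hS]; exact hjac
    exact (hX ha).2 ⟨a, haS, rfl⟩
  obtain ⟨q, hq0, hqfin⟩ := generic_finite hd Φ p hpdeg hp
  constructor
  · intro hloc K hKX hK
    exact locconst_implies_proper hcd hXopen (fun y hy => (hX hy).1) hreg hq0 hqfin
      (fun {U} hU hne' hz => eq_zero_of_eval_eqOn_open hU hne' hz) hloc hKX hK
  · intro hprop y hyX
    exact proper_implies_locconst hcd hXopen hreg hprop hyX
end

section
/- Let φ₁ ∈ L²(ℝ) satisfy ∫_0^∞ |φ₁(x)|² x^{−2} dx = ∫_0^∞ |φ₁(−x)|² x^{−2} dx = 1/2 and ∫_0^∞ φ₁(x) conj(φ₁(−x)) x^{−2} dx = 0. Define ψ(u,v) = 2 φ₁(u) φ₁(v) for (u,v) ∈ ℝ². Then ψ satisfies the TDW admissibility conditions: with Y₁ = (0,∞) × (0,∞), ∫_{Y₁} |ψ(u,v)|² u^{−2} v^{−2} du dv = 1, ∫_{Y₁} |ψ(−u,−v)|² u^{−2} v^{−2} du dv = 1, and ∫_{Y₁} ψ(−u,−v) conj(ψ(u,v)) u^{−2} v^{−2}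 du dv = 0. Hence a reproducing function for the TDW group is obtained as a tensor product of two one-dimensional wavelets. -/
open MeasureTheory Real Complex Topology
open scoped ENNReal

/-- The first quadrant `Y₁ = (0,∞) × (0,∞)`. -/
def Y1TDW : Set (ℝ × ℝ) := Set.Ioi (0 : ℝ) ×ˢ Set.Ioi (0 : ℝ)

/-- A tensor product of two one-dimensional wavelets yields a reproducing function for
the TDW group: if `φ₁ ∈ L²(ℝ)` satisfies the one-dimensional admissibility conditions,
then `ψ(u,v) = 2 φ₁(u) φ₁(v)` satisfies the TDW admissibility conditions. -/
theorem tdw_tensor_wavelet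
    (φ₁ : ℝ → ℂ) (hφ₁ : MemLp φ₁ 2 (volume : Measure ℝ))
    (h1 : ∫ x in Set.Ioi (0 : ℝ), ‖φ₁ x‖ ^ 2 / x ^ 2 = 1 / 2)
    (h2 : ∫ x in Set.Ioi (0 : ℝ), ‖φ₁ (-x)‖ ^ 2 / x ^ 2 = 1 / 2)
    (h3 : ∫ x in Set.Ioi (0 : ℝ), φ₁ x * (starRingEnd ℂ) (φ₁ (-x)) * (((x ^ 2)⁻¹ : ℝ) : ℂ)
        = 0)
    (ψ : ℝ × ℝ → ℂ) (hψ : ψ = fun p : ℝ × ℝ => 2 * φ₁ p.1 * φ₁ p.2) :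
    (∫ p in Y1TDW, ‖ψ p‖ ^ 2 / (p.1 ^ 2 * p.2 ^ 2) = 1) ∧
    (∫ p in Y1TDW, ‖ψ (-p)‖ ^ 2 / (p.1 ^ 2 * p.2 ^ 2) = 1) ∧
    (∫ p in Y1TDW,
        ψ (-p) * (starRingEnd ℂ) (ψ p) * (((p.1 ^ 2 * p.2 ^ 2)⁻¹ : ℝ) : ℂ) = 0) := by
  subst hψ
  have hvol : (volume : Measure (ℝ × ℝ)) = (volume : Measure ℝ).prod volume :=
    Measure.volume_eq_prod ℝ ℝ
  refine ⟨?_, ?_, ?_⟩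
  · have key := setIntegral_prod_mul (μ := (volume : Measure ℝ)) (ν := (volume : Measure ℝ))
      (fun x : ℝ => 2 * (‖φ₁ x‖ ^ 2 / x ^ 2)) (fun x : ℝ => 2 * (‖φ₁ x‖ ^ 2 / x ^ 2))
      (Set.Ioi 0) (Set.Ioi 0)
    have heq : ∫ p in Y1TDW, ‖(2 : ℂ) * φ₁ p.1 * φ₁ p.2‖ ^ 2 / (p.1 ^ 2 * p.2 ^ 2)
        = ∫ p in (Set.Ioi (0:ℝ)) ×ˢ (Set.Ioi (0:ℝ)),
            (2 * (‖φ₁ p.1‖ ^ 2 / p.1 ^ 2)) * (2 * (‖φ₁ p.2‖ ^ 2 / p.2 ^ 2)) := by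
      rw [Y1TDW]
      refine integral_congr_ae (Filter.Eventually.of_forall fun p => ?_)
      simp only [norm_mul, mul_pow, Complex.norm_ofNat]
      ring
    rw [heq, hvol]
    refine key.trans ?_
    rw [integral_const_mul, h1]
    norm_num
  · have key := setIntegral_prod_mul (μ := (volume : Measure ℝ)) (ν := (volume : Measure ℝ))
      (fun x : ℝ => 2 * (‖φ₁ (-x)‖ ^ 2 / x ^ 2)) (fun x : ℝ => 2 * (‖φ₁ (-x)‖ ^ 2 / x ^ 2))
      (Set.Ioi 0) (Set.Ioi 0)
    have heq : ∫ p in Y1TDW, ‖(fun p : ℝ × ℝ => 2 * φ₁ p.1 * φ₁ p.2) (-p)‖ ^ 2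
            / (p.1 ^ 2 * p.2 ^ 2)
        = ∫ p in (Set.Ioi (0:ℝ)) ×ˢ (Set.Ioi (0:ℝ)),
            (2 * (‖φ₁ (-p.1)‖ ^ 2 / p.1 ^ 2)) * (2 * (‖φ₁ (-p.2)‖ ^ 2 / p.2 ^ 2)) := by
      rw [Y1TDW]
      refine integral_congr_ae (Filter.Eventually.of_forall fun p => ?_)
      simp only [Prod.fst_neg, Prod.snd_neg, norm_mul, mul_pow,
        Complex.norm_ofNat]
      ring
    rw [heq, hvol]
    refine key.trans ?_
    rw [integral_const_mul, h2]
    norm_num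
  · have hg : ∫ x in Set.Ioi (0 : ℝ),
        (2 : ℂ) * (φ₁ (-x) * (starRingEnd ℂ) (φ₁ x) * (((x ^ 2)⁻¹ : ℝ) : ℂ)) = 0 := by
      rw [integral_const_mul]
      have hc : ∫ x in Set.Ioi (0 : ℝ),
          φ₁ (-x) * (starRingEnd ℂ) (φ₁ x) * (((x ^ 2)⁻¹ : ℝ) : ℂ)
          = (starRingEnd ℂ) (∫ x in Set.Ioi (0 : ℝ),
              φ₁ x * (starRingEnd ℂ) (φ₁ (-x)) * (((x ^ 2)⁻¹ : ℝ) : ℂ)) := by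
        rw [← integral_conj]
        refine integral_congr_ae (Filter.Eventually.of_forall fun x => ?_)
        simp only [map_mul, Complex.conj_ofReal, RingHomCompTriple.comp_apply,
          RingHom.id_apply]
        ring
      rw [hc, h3, map_zero, mul_zero]
    have key := setIntegral_prod_mul (μ := (volume : Measure ℝ)) (ν := (volume : Measure ℝ))
      (fun x : ℝ => (2 : ℂ) * (φ₁ (-x) * (starRingEnd ℂ) (φ₁ x) * (((x ^ 2)⁻¹ : ℝ) : ℂ)))
      (fun x : ℝ => (2 : ℂ) * (φ₁ (-x) * (starRingEnd ℂ) (φ₁ x) * (((x ^ 2)⁻¹ : ℝ) : ℂ)))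
      (Set.Ioi 0) (Set.Ioi 0)
    have heq : ∫ p in Y1TDW,
          (fun p : ℝ × ℝ => 2 * φ₁ p.1 * φ₁ p.2) (-p) *
            (starRingEnd ℂ) ((fun p : ℝ × ℝ => 2 * φ₁ p.1 * φ₁ p.2) p) *
            (((p.1 ^ 2 * p.2 ^ 2)⁻¹ : ℝ) : ℂ)
        = ∫ p in (Set.Ioi (0:ℝ)) ×ˢ (Set.Ioi (0:ℝ)),
            ((2 : ℂ) * (φ₁ (-p.1) * (starRingEnd ℂ) (φ₁ p.1) * (((p.1 ^ 2)⁻¹ : ℝ) : ℂ))) *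
            ((2 : ℂ) * (φ₁ (-p.2) * (starRingEnd ℂ) (φ₁ p.2) * (((p.2 ^ 2)⁻¹ : ℝ) : ℂ))) := by
      rw [Y1TDW]
      refine integral_congr_ae (Filter.Eventually.of_forall fun p => ?_)
      simp only [Prod.fst_neg, Prod.snd_neg, map_mul, map_ofNat, mul_inv]
      push_cast
      ring
    rw [heq, hvol]
    refine key.trans ?_
    rw [hg, zero_mul]
end
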